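/- The function F(x) = 4·arctan(√(1+2x)) − √(1+2x)·(3+4x)/(1+x)² is strictly increasing on [0,∞) and is a bijection from [0,∞) onto [π−3, 2π). -/

import Mathlib

open Real Set

noncomputable def F (x : ℝ) : ℝ :=
  4 * Real.arctan (Real.sqrt (1 + 2 * x)) -
    Real.sqrt (1 + 2 * x) * (3 + 4 * x) / (1 + x) ^ 2

open Filter

lemma hF_deriv (x : ℝ) (hx : 0 ≤ x) :
    HasDerivAt F (Real.sqrt (1 + 2*x) * (1 + 3*x) / (1 + x)^3) x := by
  have h2x : (0:ℝ) < 1 + 2*x := by linarith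
  have hs : 0 < Real.sqrt (1+2*x) := Real.sqrt_pos.mpr h2x
  have hs2 : Real.sqrt (1+2*x)^2 = 1+2*x := Real.sq_sqrt h2x.le
  have hx1 : (0:ℝ) < 1 + x := by linarith
  have h1 : HasDerivAt (fun y : ℝ => 1 + 2*y) 2 x := by
    simpa using ((hasDerivAt_id x).const_mul 2).const_add 1
  have hu : HasDerivAt (fun y : ℝ => Real.sqrt (1+2*y)) (1/(2*Real.sqrt (1+2*x)) * 2) x :=
    (Real.hasDerivAt_sqrt h2x.ne').comp x h1
  have ha : HasDerivAt (fun y : ℝ => Real.arctan (Real.sqrt (1+2*y)))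
      (1/(1 + Real.sqrt (1+2*x)^2) * (1/(2*Real.sqrt (1+2*x)) * 2)) x :=
    (Real.hasDerivAt_arctan _).comp x hu
  have hb : HasDerivAt (fun y : ℝ => 3 + 4*y) 4 x := by
    simpa using ((hasDerivAt_id x).const_mul 4).const_add 3
  have hnum := hu.mul hb
  have hden : HasDerivAt (fun y : ℝ => (1+y)^2) (2*(1+x)) x := by
    have := ((hasDerivAt_id x).const_add 1).fun_pow 2
    simpa using this
  have hdiv := hnum.div hden (by positivity)
  have hfin := (ha.const_mul 4).sub hdiv
  have : F = fun y : ℝ => 4 * Real.arctan (Real.sqrt (1+2*y)) -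
      Real.sqrt (1+2*y) * (3+4*y) / (1+y)^2 := rfl
  rw [this]
  refine hfin.congr_deriv ?_
  symm
  rw [hs2]
  field_simp
  ring_nf
  have hs2' : Real.sqrt (1+x*2)^2 = 1+x*2 := by
    rw [show (1+x*2 : ℝ) = 1+2*x by ring]; linarith [hs2]
  have hs3 : Real.sqrt (1+x*2)^3 = Real.sqrt (1+x*2) * (1+x*2) := by
    rw [pow_succ, hs2']; ring
  simp only [Pi.mul_apply]; linear_combination (-2*(1+x)^2) * hs2'

lemma hF_cont : ContinuousOn F (Set.Ici (0:ℝ)) :=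
  fun x hx => (hF_deriv x hx).continuousAt.continuousWithinAt

lemma hF_mono : StrictMonoOn F (Set.Ici (0:ℝ)) := by
  apply strictMonoOn_of_deriv_pos (convex_Ici 0) hF_cont
  intro x hx
  rw [interior_Ici, mem_Ioi] at hx
  rw [(hF_deriv x hx.le).deriv]
  exact div_pos (mul_pos (Real.sqrt_pos.mpr (by linarith)) (by linarith))
    (pow_pos (by linarith) 3)

lemma hF0 : F 0 = Real.pi - 3 := by
  simp [F, Real.arctan_one]
  ring

lemma hF_lt (x : ℝ) (hx : 0 ≤ x) : F x < 2 * Real.pi := by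
  have h2x : (0:ℝ) < 1 + 2*x := by linarith
  have hG : 0 < Real.sqrt (1 + 2*x) * (3 + 4*x) / (1 + x)^2 :=
    div_pos (mul_pos (Real.sqrt_pos.mpr h2x) (by linarith)) (pow_pos (by linarith) 2)
  have ha := Real.arctan_lt_pi_div_two (Real.sqrt (1 + 2*x))
  unfold F
  have : Real.sqrt (1 + 2 * x) * (3 + 4 * x) / (1 + x) ^ 2
      = Real.sqrt (1 + 2*x) * (3 + 4*x) / (1 + x)^2 := by ring_nf
  nlinarith [hG, ha]

lemma hF_tendsto : Tendsto F atTop (nhds (2 * Real.pi)) := by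
  have hlin : Tendsto (fun x : ℝ => 1 + 2*x) atTop atTop := by
    apply tendsto_atTop_add_const_left
    exact Tendsto.const_mul_atTop two_pos tendsto_id
  have hsqrtTop : Tendsto Real.sqrt atTop atTop := by
    refine tendsto_atTop_atTop.mpr fun b => ⟨(max b 0)^2, fun x hx => ?_⟩
    calc b ≤ max b 0 := le_max_left _ _
      _ = Real.sqrt ((max b 0)^2) := (Real.sqrt_sq (le_max_right _ _)).symm
      _ ≤ Real.sqrt x := Real.sqrt_le_sqrt hx
  have hsq : Tendsto (fun x : ℝ => Real.sqrt (1 + 2*x)) atTop atTop :=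
    hsqrtTop.comp hlin
  have harc : Tendsto (fun x : ℝ => Real.arctan (Real.sqrt (1 + 2*x))) atTop
      (nhds (Real.pi / 2)) :=
    (Real.tendsto_arctan_atTop.mono_right nhdsWithin_le_nhds).comp hsq
  have hGlim : Tendsto (fun x : ℝ => Real.sqrt (1 + 2*x) * (3 + 4*x) / (1 + x)^2)
      atTop (nhds 0) := by
    have hupper : Tendsto (fun x : ℝ => 7 * Real.sqrt 3 / Real.sqrt x) atTop (nhds 0) :=
      Tendsto.div_atTop tendsto_const_nhds hsqrtTop
    apply tendsto_of_tendsto_of_tendsto_of_le_of_le' tendsto_const_nhds hupper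
    · filter_upwards [eventually_ge_atTop (0:ℝ)] with x hx
      positivity
    · filter_upwards [eventually_ge_atTop (1:ℝ)] with x hx
      have hx0 : (0:ℝ) < x := by linarith
      have hsx : 0 < Real.sqrt x := Real.sqrt_pos.mpr hx0
      have hsx2 : Real.sqrt x ^ 2 = x := Real.sq_sqrt hx0.le
      have h1 : Real.sqrt (1 + 2*x) ≤ Real.sqrt 3 * Real.sqrt x := by
        rw [← Real.sqrt_mul (by norm_num)]
        exact Real.sqrt_le_sqrt (by nlinarith)
      have h2 : Real.sqrt (1 + 2*x) * (3 + 4*x) ≤ Real.sqrt 3 * Real.sqrt x * (7*x) := by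
        have := Real.sqrt_nonneg (1 + 2*x)
        have := Real.sqrt_nonneg 3
        nlinarith [Real.sqrt_nonneg x]
      have h3 : x^2 ≤ (1 + x)^2 := by nlinarith
      calc Real.sqrt (1 + 2*x) * (3 + 4*x) / (1 + x)^2
          ≤ Real.sqrt 3 * Real.sqrt x * (7*x) / x^2 := by
            apply div_le_div₀ (by positivity) h2 (by positivity) h3
        _ = 7 * Real.sqrt 3 / Real.sqrt x := by
            field_simp; linear_combination hsx2
  have heq : F = fun x : ℝ => 4 * Real.arctan (Real.sqrt (1+2*x)) -
      Real.sqrt (1+2*x) * (3+4*x) / (1+x)^2 := rfl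
  rw [heq, show 2*Real.pi = 4*(Real.pi/2) - 0 by ring]
  exact (harc.const_mul 4).sub hGlim

theorem stmt_1 :
    StrictMonoOn F (Set.Ici (0 : ℝ)) ∧
      Set.BijOn F (Set.Ici (0 : ℝ)) (Set.Ico (Real.pi - 3) (2 * Real.pi)) := by
  refine ⟨hF_mono, ?_, hF_mono.injOn, ?_⟩
  · intro x hx
    have hx' : (0:ℝ) ≤ x := hx
    refine ⟨?_, hF_lt x hx'⟩
    rw [← hF0]
    rcases eq_or_lt_of_le hx' with h | h
    · rw [← h]
    · exact (hF_mono self_mem_Ici hx h).le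
  · intro y hy
    obtain ⟨b, hb1, hb2⟩ :=
      ((hF_tendsto.eventually (isOpen_Ioi.mem_nhds hy.2)).and
        (eventually_ge_atTop (0:ℝ))).exists
    have hy' : y ∈ Set.Icc (F 0) (F b) := ⟨hF0 ▸ hy.1, le_of_lt hb1⟩
    obtain ⟨x, hx, hfx⟩ :=
      intermediate_value_Icc hb2 (hF_cont.mono Set.Icc_subset_Ici_self) hy'
    exact ⟨x, hx.1, hfx⟩
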